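/- Every e-diagram equivalent to D_beta (i.e., having classifying signed permutation beta) dominates D_beta entrywise: if D ~ D_beta then every entry of the matrix D - D_beta is nonnegative, where diagrams are written with cells in the appropriate order. In particular D_beta is the unique minimal e-diagram in its equivalence class. -/

import Mathlib

open scoped Classical

/-- The hyperoctahedral group `B_n`, modeled as pairs (permutation, sign vector),
i.e. the wreath product `ℤ₂ ≀ S_n`.  `β.2 i = true` means the entry at position `i`
is negative. -/
abbrev HO (n : ℕ) := Equiv.Perm (Fin n) × (Fin n → Bool)

namespace HO

/-- The inverse signed permutation. -/
noncomputable def inv {n : ℕ} (β : HO n) : HO n := (β.1⁻¹, fun i => β.2 (β.1⁻¹ i))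

/-- One-line notation (1-indexed): the signed value `β(i) ∈ {±1,…,±n}` for `1 ≤ i ≤ n`,
and `0` outside this range. -/
noncomputable def val {n : ℕ} (β : HO n) (i : ℕ) : ℤ :=
  if h : 1 ≤ i ∧ i ≤ n then
    (if β.2 ⟨i - 1, by omega⟩ then -(((β.1 ⟨i - 1, by omega⟩ : Fin n) : ℕ) + 1 : ℤ)
     else (((β.1 ⟨i - 1, by omega⟩ : Fin n) : ℕ) + 1 : ℤ))
  else 0

/-- The order `-1 ≺ -2 ≺ ⋯ ≺ -n ≺ ⋯ ≺ 0 ≺ 1 ≺ 2 ≺ ⋯` on `ℤ`: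
`bprec a b` means `a ≺ b`. -/
noncomputable def bprec (a b : ℤ) : Prop :=
  (a < 0 ∧ b < 0 ∧ -a < -b) ∨ (a < 0 ∧ 0 ≤ b) ∨ (0 ≤ a ∧ 0 ≤ b ∧ a < b)

/-- Descent set of `β` with respect to the order `≺`. -/
noncomputable def Des {n : ℕ} (β : HO n) : Finset ℕ :=
  (Finset.Icc 1 (n - 1)).filter fun i => bprec (val β (i + 1)) (val β i)

/-- Rise set of `β` with respect to the order `≺`. -/
noncomputable def Ris {n : ℕ} (β : HO n) : Finset ℕ :=
  (Finset.Icc 1 (n - 1)).filter fun i => bprec (val β i) (val β (i + 1))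

/-- Major index. -/
noncomputable def maj {n : ℕ} (β : HO n) : ℕ := ∑ i ∈ Des β, i

/-- Number of negative entries. -/
noncomputable def neg {n : ℕ} (β : HO n) : ℕ :=
  ((Finset.Icc 1 n).filter fun i => val β i < 0).card

/-- The flag-major index `fmaj β = 2 maj β + neg β`. -/
noncomputable def fmaj {n : ℕ} (β : HO n) : ℕ := 2 * maj β + neg β

/-- `δ_i(β) = #{j ∈ Des(β) : j < i}`. -/
noncomputable def deltaStat {n : ℕ} (β : HO n) (i : ℕ) : ℕ := ((Des β).filter fun j => j < i).card

/-- `d_i(β) = #{j ∈ Des(β) : j ≥ i}`. -/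
noncomputable def dStat {n : ℕ} (β : HO n) (i : ℕ) : ℕ := ((Des β).filter fun j => i ≤ j).card

/-- `ε_i(β) = 1` if `β(i) < 0`, else `0`. -/
noncomputable def epsStat {n : ℕ} (β : HO n) (i : ℕ) : ℕ := if val β i < 0 then 1 else 0

/-- `η_i(β) = 1` if `β(i) > 0`, else `0`. -/
noncomputable def etaStat {n : ℕ} (β : HO n) (i : ℕ) : ℕ := if 0 < val β i then 1 else 0

/-- `g_i(β) = 2 δ_i(β) + η_i(β)`. -/
noncomputable def gstat {n : ℕ} (β : HO n) (i : ℕ) : ℕ := 2 * deltaStat β i + etaStat β i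

/-- `f_i(β) = 2 d_i(β) + ε_i(β)` (so that `fmaj β = ∑ f_i(β)`). -/
noncomputable def fStat {n : ℕ} (β : HO n) (i : ℕ) : ℕ := 2 * dStat β i + epsStat β i

/-- `μ_i(β) = #{k ∈ Ris(β⁻¹) : k < i}`. -/
noncomputable def muStat {n : ℕ} (β : HO n) (i : ℕ) : ℕ := ((Ris (inv β)).filter fun k => k < i).card

/-- `ĝ_i(β) = 2 μ_{σ(i)}(β) + ε_i(β)`, where `σ(i) = |β(i)|`. -/
noncomputable def ghat {n : ℕ} (β : HO n) (i : ℕ) : ℕ :=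
  2 * muStat β (val β i).natAbs + epsStat β i

end HO

/-- The key used for the labelling (opposite-lexicographic) order on the cells of a
diagram `D : Fin n → ℕ × ℕ`: compare `b`, then `a`, then the index (to break ties). -/
noncomputable def okey {n : ℕ} (D : Fin n → ℕ × ℕ) (i : Fin n) : ℕ ×ₗ (ℕ ×ₗ ℕ) :=
  toLex ((D i).2, toLex ((D i).1, (i : ℕ)))

/-- The label of the `i`-th cell of `D` (cells listed in reading = lex order):
its rank in the opposite-lexicographic labelling order. -/
noncomputable def labelOf {n : ℕ} (D : Fin n → ℕ × ℕ) (i : Fin n) : ℕ :=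
  (Finset.univ.filter fun j : Fin n => okey D j ≤ okey D i).card

/-- The value at `i` of the classifying signed permutation `β(D)` of a diagram `D`
whose cells are listed in lex (reading) order: `β(D)(i) = (-1)^{a_i + 1} · label(i)`. -/
noncomputable def classifyVal {n : ℕ} (D : Fin n → ℕ × ℕ) (i : Fin n) : ℤ :=
  (if (D i).1 % 2 = 1 then 1 else -1) * (labelOf D i : ℤ)

/-- The compact `e`-diagram `D_β = (g(β), g̃(β))`, with cells listed in reading order:
the `i`-th cell is `(g_i(β), g_{σ(i)}(β⁻¹))` where `σ(i) = |β(i)|`. -/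
noncomputable def Dbeta {n : ℕ} (β : HO n) (i : Fin n) : ℕ × ℕ :=
  (HO.gstat β ((i : ℕ) + 1), HO.gstat (HO.inv β) (HO.val β ((i : ℕ) + 1)).natAbs)



/-! ### Auxiliary lemmas for the proof -/

section Aux

lemma delta_one {n : ℕ} (β : HO n) : HO.deltaStat β 1 = 0 := by
  unfold HO.deltaStat
  rw [Finset.card_eq_zero, Finset.filter_eq_empty_iff]
  intro j hj
  simp only [HO.Des, Finset.mem_filter, Finset.mem_Icc] at hj
  omega

lemma delta_succ {n : ℕ} (β : HO n) (i : ℕ) :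
    HO.deltaStat β (i+1) = HO.deltaStat β i + (if i ∈ HO.Des β then 1 else 0) := by
  unfold HO.deltaStat
  have h : ((HO.Des β).filter fun j => j < i + 1)
      = ((HO.Des β).filter fun j => j < i) ∪ ((HO.Des β).filter fun j => j = i) := by
    ext j
    simp only [Finset.mem_union, Finset.mem_filter]
    constructor
    · rintro ⟨hj, hlt⟩
      rcases Nat.lt_or_ge j i with hx|hx
      · exact Or.inl ⟨hj, hx⟩
      · exact Or.inr ⟨hj, by omega⟩
    · rintro (⟨hj, hlt⟩|⟨hj, rfl⟩) <;> exact ⟨hj, by omega⟩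
  rw [h, Finset.card_union_of_disjoint]
  · congr 1
    rw [Finset.filter_eq']
    split <;> simp
  · rw [Finset.disjoint_left]
    intro a ha hb
    simp only [Finset.mem_filter] at ha hb
    omega

lemma core {n : ℕ} (β : HO n) (c : ℕ → ℕ)
    (h1 : ∀ i, 1 ≤ i → i + 1 ≤ n → c i ≤ c (i+1))
    (h2 : ∀ i, 1 ≤ i → i + 1 ≤ n → i ∈ HO.Des β → c i < c (i+1))
    (h3 : ∀ i, 1 ≤ i → i ≤ n → (c i % 2 = 1 ↔ 0 < HO.val β i))
    (h4 : ∀ i, 1 ≤ i → i ≤ n → HO.val β i ≠ 0) :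
    ∀ i, 1 ≤ i → i ≤ n → HO.gstat β i ≤ c i := by
  intro i
  induction i with
  | zero => omega
  | succ i ih =>
    intro _ hin
    rcases Nat.eq_zero_or_pos i with rfl | hi
    · show HO.gstat β 1 ≤ c 1
      have hp := h3 1 le_rfl hin
      unfold HO.gstat HO.etaStat
      rw [delta_one]
      split_ifs with h
      · have := hp.2 h; omega
      · omega
    · have hc := ih hi (by omega)
      unfold HO.gstat at hc ⊢
      rw [delta_succ]
      have hpi := h3 i hi (by omega)
      have hpi1 := h3 (i+1) (by omega) hin
      have hei : HO.etaStat β i = c i % 2 := by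
        unfold HO.etaStat; split_ifs with h
        · exact (hpi.2 h).symm
        · omega
      have hei1 : HO.etaStat β (i+1) = c (i+1) % 2 := by
        unfold HO.etaStat; split_ifs with h
        · exact (hpi1.2 h).symm
        · omega
      by_cases hdes : i ∈ HO.Des β
      · rw [if_pos hdes]
        have hlt := h2 i hi (by omega) hdes
        have hnd : ¬ (c i % 2 = 0 ∧ c (i+1) % 2 = 1) := by
          rintro ⟨ha, hb⟩
          have hv1 : HO.val β i < 0 := by
            have := h4 i hi (by omega)
            rcases lt_trichotomy (HO.val β i) 0 with hx|hx|hx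
            · exact hx
            · omega
            · have := hpi.2 hx; omega
          have hv2 : 0 < HO.val β (i+1) := hpi1.1 hb
          simp only [HO.Des, Finset.mem_filter, Finset.mem_Icc] at hdes
          rcases hdes.2 with ⟨hx, _⟩|⟨hx, _⟩|⟨hx, _, _⟩ <;> omega
        omega
      · rw [if_neg hdes]
        have := h1 i hi (by omega)
        omega

lemma okey_inj {n : ℕ} (D : Fin n → ℕ × ℕ) : Function.Injective (okey D) := by
  intro i j h
  simp only [okey, toLex_inj, Prod.ext_iff] at h
  exact Fin.ext h.2.2

lemma label_le_of_okey_le {n : ℕ} (D : Fin n → ℕ × ℕ) {i j : Fin n}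
    (h : okey D i ≤ okey D j) : labelOf D i ≤ labelOf D j := by
  apply Finset.card_le_card
  intro k hk
  simp only [Finset.mem_filter, Finset.mem_univ, true_and] at hk ⊢
  exact le_trans hk h

lemma label_lt_of_okey_lt {n : ℕ} (D : Fin n → ℕ × ℕ) {i j : Fin n}
    (h : okey D i < okey D j) : labelOf D i < labelOf D j := by
  apply Finset.card_lt_card
  rw [Finset.ssubset_iff_of_subset]
  · refine ⟨j, ?_, ?_⟩
    · simp
    · simp only [Finset.mem_filter, Finset.mem_univ, true_and]
      exact fun hle => absurd h (not_lt.2 hle)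
  · intro k hk
    simp only [Finset.mem_filter, Finset.mem_univ, true_and] at hk ⊢
    exact le_trans hk h.le

lemma okey_lt_of_label_lt {n : ℕ} (D : Fin n → ℕ × ℕ) {i j : Fin n}
    (h : labelOf D i < labelOf D j) : okey D i < okey D j := by
  by_contra hle
  exact absurd (label_le_of_okey_le D (not_lt.1 hle)) (by omega)

lemma label_inj {n : ℕ} (D : Fin n → ℕ × ℕ) : Function.Injective (labelOf D) := by
  intro i j h
  by_contra hne
  rcases (Ne.lt_or_gt ((okey_inj D).ne hne)) with hx|hx <;>
    [exact absurd (label_lt_of_okey_lt D hx) (by omega);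
     exact absurd (label_lt_of_okey_lt D hx) (by omega)]

lemma one_le_label {n : ℕ} (D : Fin n → ℕ × ℕ) (i : Fin n) : 1 ≤ labelOf D i := by
  have h : (Finset.univ.filter fun j : Fin n => okey D j ≤ okey D i).Nonempty := ⟨i, by simp⟩
  have := Finset.card_pos.2 h
  unfold labelOf
  omega

lemma label_le_n {n : ℕ} (D : Fin n → ℕ × ℕ) (i : Fin n) : labelOf D i ≤ n := by
  have := Finset.card_filter_le Finset.univ (fun j : Fin n => okey D j ≤ okey D i)
  unfold labelOf
  simpa using this

lemma label_surj {n : ℕ} (D : Fin n → ℕ × ℕ) {k : ℕ} (h1 : 1 ≤ k) (h2 : k ≤ n) :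
    ∃ i, labelOf D i = k := by
  have himage : Finset.image (labelOf D) Finset.univ = Finset.Icc 1 n := by
    apply Finset.eq_of_subset_of_card_le
    · intro x hx
      simp only [Finset.mem_image, Finset.mem_univ, true_and] at hx
      obtain ⟨i, rfl⟩ := hx
      exact Finset.mem_Icc.2 ⟨one_le_label D i, label_le_n D i⟩
    · rw [Finset.card_image_of_injective _ (label_inj D)]
      simp
  have : k ∈ Finset.image (labelOf D) Finset.univ := himage ▸ Finset.mem_Icc.2 ⟨h1, h2⟩
  simpa using this

lemma val_succ {n : ℕ} (β : HO n) (i : Fin n) :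
    HO.val β ((i : ℕ) + 1)
      = if β.2 i then -(((β.1 i : ℕ) : ℤ) + 1) else (((β.1 i : ℕ) : ℤ) + 1) := by
  have h : 1 ≤ (i : ℕ) + 1 ∧ (i : ℕ) + 1 ≤ n := ⟨by omega, i.isLt⟩
  rw [HO.val, dif_pos h]
  have : (⟨(i : ℕ) + 1 - 1, by omega⟩ : Fin n) = i := by ext; simp
  rw [this]

lemma cell_facts {n : ℕ} (β : HO n) (D : Fin n → ℕ × ℕ)
    (hclass : ∀ i : Fin n, classifyVal D i = HO.val β ((i : ℕ) + 1)) (i : Fin n) :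
    HO.val β ((i:ℕ)+1) = (if (D i).1 % 2 = 1 then 1 else -1) * (labelOf D i) ∧
    HO.val (HO.inv β) (labelOf D i)
      = (if (D i).1 % 2 = 1 then 1 else -1) * (((i:ℕ):ℤ)+1) := by
  have h1 := (hclass i).symm
  rw [val_succ] at h1
  unfold classifyVal at h1
  have hL1 : 1 ≤ labelOf D i := one_le_label D i
  have hLn : labelOf D i ≤ n := label_le_n D i
  have key : (labelOf D i : ℤ) = ((β.1 i : ℕ) : ℤ) + 1 ∧ (β.2 i = true ↔ ¬ (D i).1 % 2 = 1) := by
    have hval := h1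
    by_cases hp : (D i).1 % 2 = 1 <;> by_cases hb : β.2 i = true <;>
      simp [hp, hb] at hval
    · exact absurd hval (by omega)
    · exact ⟨by omega, by simp [hb, hp]⟩
    · exact ⟨by omega, by simp [hb, hp]⟩
    · exact absurd hval (by omega)
  obtain ⟨hkey, hsgn⟩ := key
  refine ⟨(hclass i).symm, ?_⟩
  have hcond : 1 ≤ labelOf D i ∧ labelOf D i ≤ n := ⟨hL1, hLn⟩
  rw [HO.val, dif_pos hcond]
  have hidx : (⟨labelOf D i - 1, by omega⟩ : Fin n) = β.1 i := by
    apply Fin.ext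
    simp only [Fin.val_mk]
    omega
  have hperm : ((HO.inv β).1 ⟨labelOf D i - 1, by omega⟩ : Fin n) = i := by
    show (β.1⁻¹ _ : Fin n) = i
    rw [hidx]
    exact Equiv.symm_apply_apply β.1 i
  have hsgn2 : (HO.inv β).2 ⟨labelOf D i - 1, by omega⟩ = β.2 i := by
    show β.2 (β.1⁻¹ _) = β.2 i
    rw [hidx]; exact congrArg β.2 (Equiv.symm_apply_apply β.1 i)
  rw [hperm, hsgn2]
  rcases Bool.eq_false_or_eq_true (β.2 i) with hb | hb <;> rw [hb]
  · have hp : ¬ (D i).1 % 2 = 1 := hsgn.1 hb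
    rw [if_neg hp]
    norm_num
  · have hp : (D i).1 % 2 = 1 := by
      by_contra hp
      exact absurd (hsgn.2 hp) (by simp [hb])
    rw [if_pos hp]
    norm_num

lemma okey_lt_iff {n : ℕ} (D : Fin n → ℕ × ℕ) (i j : Fin n) :
    okey D i < okey D j ↔ ((D i).2 < (D j).2 ∨ ((D i).2 = (D j).2 ∧
      ((D i).1 < (D j).1 ∨ ((D i).1 = (D j).1 ∧ (i : ℕ) < (j : ℕ))))) := by
  unfold okey
  rw [Prod.Lex.lt_iff]
  simp only [Prod.Lex.lt_iff, ofLex_toLex]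

lemma des_mem {n : ℕ} (β : HO n) (m : ℕ) :
    m ∈ HO.Des β ↔ (1 ≤ m ∧ m ≤ n - 1 ∧ HO.bprec (HO.val β (m+1)) (HO.val β m)) := by
  simp only [HO.Des, Finset.mem_filter, Finset.mem_Icc]
  tauto

end Aux

/-- every `e`-diagram `D` equivalent to `D_β` (i.e. with classifying
signed permutation `β`) dominates `D_β` entrywise; in particular `D_β` is the unique
minimal `e`-diagram in its equivalence class. -/
theorem Dbeta_minimal (n : ℕ) (β : HO n) (D : Fin n → ℕ × ℕ)
    (hsort : Monotone fun i => toLex (D i))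
    (heven : ∀ i, ((D i).1 + (D i).2) % 2 = 0)
    (hclass : ∀ i : Fin n, classifyVal D i = HO.val β ((i : ℕ) + 1)) :
    ∀ i : Fin n, (Dbeta β i).1 ≤ (D i).1 ∧ (Dbeta β i).2 ≤ (D i).2 := by
  classical
  have hab : ∀ i : Fin n, (D i).1 % 2 = (D i).2 % 2 := fun i => by have := heven i; omega
  have cf := cell_facts β D hclass
  have hsort2 : ∀ i j : Fin n, i ≤ j → toLex (D i) ≤ toLex (D j) := fun i j h => hsort h
  have hfst : ∀ i j : Fin n, i ≤ j → (D i).1 ≤ (D j).1 := by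
    intro i j h
    have := hsort2 i j h
    rw [Prod.Lex.le_iff] at this
    simp only [ofLex_toLex] at this
    rcases this with hx|⟨hx,_⟩ <;> omega
  -- Application A : first coordinates
  set c1 : ℕ → ℕ := fun m => if h : m - 1 < n then (D ⟨m - 1, h⟩).1 else 0 with hc1def
  have hc1 : ∀ i : Fin n, c1 ((i:ℕ) + 1) = (D i).1 := by
    intro i
    simp only [hc1def, Nat.add_sub_cancel]
    rw [dif_pos i.isLt]
  have hcell : ∀ m, 1 ≤ m → m ≤ n → ∃ i : Fin n, (i:ℕ) + 1 = m ∧ c1 m = (D i).1 := by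
    intro m h1 h2
    refine ⟨⟨m-1, by omega⟩, by simp; omega, ?_⟩
    simp only [hc1def]
    rw [dif_pos (show m - 1 < n by omega)]
  have h1A : ∀ m, 1 ≤ m → m + 1 ≤ n → c1 m ≤ c1 (m+1) := by
    intro m hm hmn
    obtain ⟨i, hi, hci⟩ := hcell m hm (by omega)
    obtain ⟨j, hj, hcj⟩ := hcell (m+1) (by omega) hmn
    rw [hci, hcj]
    exact hfst i j (by rw [Fin.le_def]; omega)
  have h2A : ∀ m, 1 ≤ m → m + 1 ≤ n → m ∈ HO.Des β → c1 m < c1 (m+1) := by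
    intro m hm hmn hdes
    obtain ⟨i, hi, hci⟩ := hcell m hm (by omega)
    obtain ⟨j, hj, hcj⟩ := hcell (m+1) (by omega) hmn
    rw [hci, hcj]
    by_contra hle
    have hij : i ≤ j := by rw [Fin.le_def]; omega
    have haij : (D i).1 = (D j).1 := le_antisymm (hfst i j hij) (by omega)
    have hbij : (D i).2 ≤ (D j).2 := by
      have := hsort2 i j hij
      rw [Prod.Lex.le_iff] at this
      simp only [ofLex_toLex] at this
      rcases this with hx|⟨_,hx⟩ <;> omega
    have hok : okey D i < okey D j := by
      rw [okey_lt_iff]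
      rcases Nat.lt_or_ge (D i).2 (D j).2 with hx|hx
      · exact Or.inl hx
      · exact Or.inr ⟨by omega, Or.inr ⟨haij, by omega⟩⟩
    have hlab := label_lt_of_okey_lt D hok
    have hLi := one_le_label D i
    have hLj := one_le_label D j
    have hdes2 := ((des_mem β m).1 hdes).2.2
    rw [← hj, ← hi] at hdes2
    rw [(cf j).1, (cf i).1] at hdes2
    have hpar : (D i).1 % 2 = (D j).1 % 2 := by rw [haij]
    by_cases hp : (D i).1 % 2 = 1
    · rw [if_pos hp, if_pos (by omega)] at hdes2
      unfold HO.bprec at hdes2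
      rcases hdes2 with ⟨hx,hy,hz⟩|⟨hx,hy⟩|⟨hx,hy,hz⟩ <;> omega
    · rw [if_neg hp, if_neg (by omega)] at hdes2
      unfold HO.bprec at hdes2
      rcases hdes2 with ⟨hx,hy,hz⟩|⟨hx,hy⟩|⟨hx,hy,hz⟩ <;> omega
  have h3A : ∀ m, 1 ≤ m → m ≤ n → (c1 m % 2 = 1 ↔ 0 < HO.val β m) := by
    intro m hm hmn
    obtain ⟨i, hi, hci⟩ := hcell m hm hmn
    rw [hci, ← hi, (cf i).1]
    have hLi := one_le_label D i
    by_cases hp : (D i).1 % 2 = 1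
    · rw [if_pos hp]; omega
    · rw [if_neg hp]; omega
  have h4A : ∀ m, 1 ≤ m → m ≤ n → HO.val β m ≠ 0 := by
    intro m hm hmn
    obtain ⟨i, hi, _⟩ := hcell m hm hmn
    rw [← hi, (cf i).1]
    have hLi := one_le_label D i
    by_cases hp : (D i).1 % 2 = 1
    · rw [if_pos hp]; omega
    · rw [if_neg hp]; omega
  have hA := core β c1 h1A h2A h3A h4A
  -- Application B : second coordinates, cells in label order
  set c2 : ℕ → ℕ :=
    fun k => if h : ∃ i : Fin n, labelOf D i = k then (D (Classical.choose h)).2 else 0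
    with hc2def
  have hc2 : ∀ i : Fin n, c2 (labelOf D i) = (D i).2 := by
    intro i
    have hex : ∃ j : Fin n, labelOf D j = labelOf D i := ⟨i, rfl⟩
    simp only [hc2def]
    rw [dif_pos hex]
    have hspec := Classical.choose_spec hex
    rw [label_inj D hspec]
  have hcellB : ∀ k, 1 ≤ k → k ≤ n → ∃ i : Fin n, labelOf D i = k ∧ c2 k = (D i).2 := by
    intro k h1 h2
    obtain ⟨i, hi⟩ := label_surj D h1 h2
    exact ⟨i, hi, by rw [← hi, hc2]⟩
  have h1B : ∀ k, 1 ≤ k → k + 1 ≤ n → c2 k ≤ c2 (k+1) := by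
    intro k hk hkn
    obtain ⟨i, hi, hci⟩ := hcellB k hk (by omega)
    obtain ⟨j, hj, hcj⟩ := hcellB (k+1) (by omega) hkn
    rw [hci, hcj]
    have hok := okey_lt_of_label_lt D (i := i) (j := j) (by omega)
    rw [okey_lt_iff] at hok
    rcases hok with hx|⟨hx,_⟩ <;> omega
  have h2B : ∀ k, 1 ≤ k → k + 1 ≤ n → k ∈ HO.Des (HO.inv β) → c2 k < c2 (k+1) := by
    intro k hk hkn hdes
    obtain ⟨i, hi, hci⟩ := hcellB k hk (by omega)
    obtain ⟨j, hj, hcj⟩ := hcellB (k+1) (by omega) hkn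
    rw [hci, hcj]
    by_contra hle
    have hok := okey_lt_of_label_lt D (i := i) (j := j) (by omega)
    rw [okey_lt_iff] at hok
    have hbij : (D i).2 = (D j).2 := by rcases hok with hx|⟨hx,_⟩ <;> omega
    have hpar : (D i).1 % 2 = (D j).1 % 2 := by
      have ha1 := hab i; have ha2 := hab j; omega
    have hij : (i:ℕ) < (j:ℕ) := by
      rcases hok with hx|⟨_, hx|⟨hx,hy⟩⟩
      · omega
      · by_contra hge
        have hle2 : j ≤ i := by rw [Fin.le_def]; omega
        have := hfst j i hle2
        omega
      · exact hy
    have hdes2 := ((des_mem (HO.inv β) k).1 hdes).2.2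
    rw [← hj, ← hi] at hdes2
    rw [(cf j).2, (cf i).2] at hdes2
    by_cases hp : (D i).1 % 2 = 1
    · rw [if_pos hp, if_pos (by omega)] at hdes2
      unfold HO.bprec at hdes2
      rcases hdes2 with ⟨hx,hy,hz⟩|⟨hx,hy⟩|⟨hx,hy,hz⟩ <;> omega
    · rw [if_neg hp, if_neg (by omega)] at hdes2
      unfold HO.bprec at hdes2
      rcases hdes2 with ⟨hx,hy,hz⟩|⟨hx,hy⟩|⟨hx,hy,hz⟩ <;> omega
  have h3B : ∀ k, 1 ≤ k → k ≤ n → (c2 k % 2 = 1 ↔ 0 < HO.val (HO.inv β) k) := by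
    intro k hk hkn
    obtain ⟨i, hi, hci⟩ := hcellB k hk hkn
    rw [hci, ← hi, (cf i).2]
    have := hab i
    by_cases hp : (D i).1 % 2 = 1
    · rw [if_pos hp]; omega
    · rw [if_neg hp]; omega
  have h4B : ∀ k, 1 ≤ k → k ≤ n → HO.val (HO.inv β) k ≠ 0 := by
    intro k hk hkn
    obtain ⟨i, hi, _⟩ := hcellB k hk hkn
    rw [← hi, (cf i).2]
    by_cases hp : (D i).1 % 2 = 1
    · rw [if_pos hp]; omega
    · rw [if_neg hp]; omega
  have hB := core (HO.inv β) c2 h1B h2B h3B h4B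
  -- Conclusion
  intro i
  constructor
  · show HO.gstat β ((i:ℕ)+1) ≤ (D i).1
    rw [← hc1 i]
    exact hA ((i:ℕ)+1) (by omega) i.isLt
  · show HO.gstat (HO.inv β) (HO.val β ((i:ℕ)+1)).natAbs ≤ (D i).2
    have hL : (HO.val β ((i:ℕ)+1)).natAbs = labelOf D i := by
      rw [(cf i).1]
      by_cases hp : (D i).1 % 2 = 1
      · rw [if_pos hp]; simp
      · rw [if_neg hp]; simp
    rw [hL, ← hc2 i]
    exact hB (labelOf D i) (one_le_label D i) (label_le_n D i)
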